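/- Under the hypotheses of the essential monadicity theorem, the Kleisli comparison induces an equivalence Kleisli(A)^♮ ≃ D after idempotent completion: the Karoubi envelope of the Kleisli category of A is equivalent to D. -/

import Mathlib

open CategoryTheory

variable {C D : Type*} [Category C] [Category D]

/-- The Kleisli comparison functor `K : Kleisli(GF) ⥤ D` of an adjunction `F ⊣ G`,
sending `x` to `F x`; it satisfies `K ∘ F_A = F` and `G ∘ K = U_A`. -/
def kleisliComparison {F : C ⥤ D} {G : D ⥤ C} (adj : F ⊣ G) :
    Kleisli adj.toMonad ⥤ D where
  obj X := F.obj X.of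
  map {X Y} f := F.map f.of ≫ adj.counit.app (F.obj Y.of)
  map_id X := by
    change F.map (adj.unit.app X.of) ≫ adj.counit.app (F.obj X.of) = _
    simp
  map_comp {X Y Z} f g := by
    change F.map (f.of ≫ G.map (F.map g.of) ≫ G.map (adj.counit.app _)) ≫ _ = _
    dsimp [Adjunction.toMonad]
    simp [adj.counit_naturality_assoc]

open Limits Pretriangulated Idempotents

/-- Under the hypotheses of the essential monadicity theorem, the Kleisli comparison
functor `K : Kleisli(A) ⥤ D` induces an equivalence `Kleisli(A)^♮ ≌ D` after idempotent
completion (Karoubi envelope). -/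
theorem kleisli_karoubi_equivalence
    {C D : Type*} [Category C] [Category D]
    [HasZeroObject C] [HasZeroObject D] [Preadditive C] [Preadditive D]
    [HasShift C ℤ] [HasShift D ℤ]
    [∀ n : ℤ, (CategoryTheory.shiftFunctor C n).Additive]
    [∀ n : ℤ, (CategoryTheory.shiftFunctor D n).Additive]
    [Pretriangulated C] [Pretriangulated D]
    [IsIdempotentComplete C] [IsIdempotentComplete D]
    {F : C ⥤ D} {G : D ⥤ C}
    [F.Additive] [F.CommShift ℤ] [F.IsTriangulated]
    [G.Additive] [G.CommShift ℤ] [G.IsTriangulated] [G.ReflectsIsomorphisms]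
    (adj : F ⊣ G)
    [HasZeroObject adj.toMonad.Algebra] [Preadditive adj.toMonad.Algebra]
    [HasShift adj.toMonad.Algebra ℤ]
    [∀ n : ℤ, (CategoryTheory.shiftFunctor adj.toMonad.Algebra n).Additive]
    [Pretriangulated adj.toMonad.Algebra]
    [adj.toMonad.forget.Additive] [adj.toMonad.forget.CommShift ℤ]
    [adj.toMonad.forget.IsTriangulated]
    [adj.toMonad.free.Additive] [adj.toMonad.free.CommShift ℤ]
    [adj.toMonad.free.IsTriangulated] :
    ∃ K' : Karoubi (Kleisli adj.toMonad) ⥤ D,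
      Nonempty (toKaroubi (Kleisli adj.toMonad) ⋙ K' ≅ kleisliComparison adj) ∧
        K'.IsEquivalence := by
  set K : Kleisli adj.toMonad ⥤ D := kleisliComparison adj with hKdef
  -- description of `K.map`
  have Kmap : ∀ {X Y : Kleisli adj.toMonad} (f : X ⟶ Y),
      K.map f = (adj.homEquiv X.of (F.obj Y.of)).symm f.of := by
    intro X Y f
    exact (Adjunction.homEquiv_counit ..).symm
  have Kinj : ∀ {X Y : Kleisli adj.toMonad} (f g : X ⟶ Y), K.map f = K.map g → f = g := by
    intro X Y f g h
    rw [Kmap f, Kmap g] at h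
    exact Kleisli.hom_ext ((adj.homEquiv _ _).symm.injective h)
  have Ksurj : ∀ {X Y : Kleisli adj.toMonad} (g : K.obj X ⟶ K.obj Y), ∃ f : X ⟶ Y, K.map f = g := by
    intro X Y g
    refine ⟨⟨adj.homEquiv X.of (F.obj Y.of) g⟩, ?_⟩
    rw [Kmap]
    exact (adj.homEquiv _ _).symm_apply_apply g
  -- Key retract lemma : every object of `D` is a retract of `F (G d)`
  have key : ∀ d : D, ∃ i : d ⟶ F.obj (G.obj d), i ≫ adj.counit.app d = 𝟙 d := by
    intro d
    set B : adj.toMonad.Algebra := (Monad.comparison adj).obj d with hB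
    set ε' : adj.toMonad.free.obj B.A ⟶ B := { f := B.a, h := B.assoc.symm } with hε'
    obtain ⟨Z, g, hZ, mem⟩ := Pretriangulated.distinguished_cocone_triangle ε'
    have hg0 : g = 0 := by
      apply adj.toMonad.forget.map_injective
      rw [Functor.map_zero]
      have h1 : ε' ≫ g = 0 := Pretriangulated.comp_distTriang_mor_zero₁₂ _ mem
      have h2 : B.a ≫ adj.toMonad.forget.map g = 0 := by
        have h1' : adj.toMonad.forget.map (ε' ≫ g) = adj.toMonad.forget.map 0 :=
          congrArg adj.toMonad.forget.map h1
        rw [Functor.map_comp, Functor.map_zero] at h1'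
        exact h1'
      have h3 : (adj.toMonad.η.app B.A ≫ B.a) ≫ adj.toMonad.forget.map g = 0 := by
        calc _ = adj.toMonad.η.app B.A ≫ (B.a ≫ adj.toMonad.forget.map g) := Category.assoc _ _ _
          _ = 0 := by rw [h2, Limits.comp_zero]
      rw [B.unit] at h3
      exact (Category.id_comp _).symm.trans h3
    obtain ⟨s, hs⟩ := Pretriangulated.Triangle.coyoneda_exact₂ _ mem (𝟙 B)
      (by rw [hg0]; exact Limits.comp_zero)
    have hsf : s.f ≫ B.a = 𝟙 B.A := by
      have := congrArg (fun φ => adj.toMonad.forget.map φ) hs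
      exact this.symm
    -- re-typed versions of `s.f` and its properties, with syntactically clean types
    obtain ⟨s', hs'eq⟩ : ∃ x : G.obj d ⟶ G.obj (F.obj (G.obj d)), x = s.f := ⟨s.f, rfl⟩
    have hs'1 : s' ≫ G.map (adj.counit.app d) = 𝟙 (G.obj d) := by
      rw [hs'eq]; exact hsf
    have hs'2 : G.map (F.map s') ≫ G.map (adj.counit.app (F.obj (G.obj d))) =
        G.map (adj.counit.app d) ≫ s' := by
      rw [hs'eq]; exact s.h
    have hs'1a := reassoc_of% hs'1
    obtain ⟨e, he_def⟩ :
        ∃ e' : F.obj (G.obj d) ⟶ F.obj (G.obj d),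
          e' = F.map s' ≫ adj.counit.app (F.obj (G.obj d)) := ⟨_, rfl⟩
    have hGe : G.map e = G.map (adj.counit.app d) ≫ s' := by
      rw [he_def, G.map_comp]
      exact hs'2
    have nat5 : adj.counit.app (F.obj (G.obj d)) ≫ adj.counit.app d =
        F.map (G.map (adj.counit.app d)) ≫ adj.counit.app d :=
      (adj.counit.naturality (adj.counit.app d)).symm
    have heε : e ≫ adj.counit.app d = adj.counit.app d := by
      rw [he_def, Category.assoc, nat5, ← F.map_comp_assoc, hs'1, F.map_id, Category.id_comp]
    have nat3 : adj.counit.app (F.obj (G.obj d)) ≫ F.map s' =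
        F.map (G.map (F.map s')) ≫ adj.counit.app (F.obj (G.obj (F.obj (G.obj d)))) :=
      (adj.counit.naturality (F.map s')).symm
    have nat4 : adj.counit.app (F.obj (G.obj (F.obj (G.obj d)))) ≫
          adj.counit.app (F.obj (G.obj d)) =
        F.map (G.map (adj.counit.app (F.obj (G.obj d)))) ≫ adj.counit.app (F.obj (G.obj d)) :=
      (adj.counit.naturality (adj.counit.app (F.obj (G.obj d)))).symm
    have he : e ≫ e = e := by
      rw [he_def]
      calc (F.map s' ≫ adj.counit.app (F.obj (G.obj d))) ≫
            F.map s' ≫ adj.counit.app (F.obj (G.obj d))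
          = F.map s' ≫ (adj.counit.app (F.obj (G.obj d)) ≫ F.map s') ≫
              adj.counit.app (F.obj (G.obj d)) := by simp only [Category.assoc]
        _ = F.map s' ≫ F.map (G.map (F.map s')) ≫
              adj.counit.app (F.obj (G.obj (F.obj (G.obj d)))) ≫
              adj.counit.app (F.obj (G.obj d)) := by rw [nat3]; simp only [Category.assoc]
        _ = F.map s' ≫ F.map (G.map (F.map s')) ≫
              F.map (G.map (adj.counit.app (F.obj (G.obj d)))) ≫
              adj.counit.app (F.obj (G.obj d)) := by rw [nat4]
        _ = F.map (s' ≫ G.map (F.map s') ≫ G.map (adj.counit.app (F.obj (G.obj d)))) ≫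
              adj.counit.app (F.obj (G.obj d)) := by
            simp only [F.map_comp, Category.assoc]
        _ = F.map (s' ≫ G.map (adj.counit.app d) ≫ s') ≫
              adj.counit.app (F.obj (G.obj d)) := by rw [hs'2]
        _ = F.map s' ≫ adj.counit.app (F.obj (G.obj d)) := by rw [hs'1a]
    obtain ⟨Y, ι, ρ, h1, h2⟩ := IsIdempotentComplete.idempotents_split _ e he
    obtain ⟨φ, hφ⟩ : ∃ φ' : Y ⟶ d, φ' = ι ≫ adj.counit.app d := ⟨_, rfl⟩
    have hιρ : ι ≫ e ≫ ρ = 𝟙 Y := by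
      rw [← h2]
      calc ι ≫ (ρ ≫ ι) ≫ ρ = (ι ≫ ρ) ≫ ι ≫ ρ := by simp only [Category.assoc]
        _ = 𝟙 Y := by rw [h1]; simp
    have hGiso : IsIso (G.map φ) := by
      refine ⟨⟨s' ≫ G.map ρ, ?_, ?_⟩⟩
      · calc G.map φ ≫ s' ≫ G.map ρ
            = G.map ι ≫ (G.map (adj.counit.app d) ≫ s') ≫ G.map ρ := by
              rw [hφ, G.map_comp]; simp only [Category.assoc]
          _ = G.map ι ≫ G.map e ≫ G.map ρ := by rw [← hGe]
          _ = G.map (ι ≫ e ≫ ρ) := by simp only [G.map_comp]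
          _ = 𝟙 (G.obj Y) := by rw [hιρ, G.map_id]
      · calc (s' ≫ G.map ρ) ≫ G.map φ
            = s' ≫ G.map (ρ ≫ ι) ≫ G.map (adj.counit.app d) := by
              rw [hφ, G.map_comp, G.map_comp]; simp only [Category.assoc]
          _ = s' ≫ G.map (e ≫ adj.counit.app d) := by rw [h2, ← G.map_comp]
          _ = 𝟙 (G.obj d) := by rw [heε, hs'1]
    have : IsIso φ := isIso_of_reflects_iso φ G
    exact ⟨inv φ ≫ ι, by rw [Category.assoc, ← hφ, IsIso.inv_hom_id]⟩
  refine ⟨(functorExtension (Kleisli adj.toMonad) D).obj K, ⟨?_⟩, ?_⟩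
  · exact (Functor.associator _ _ _).symm ≪≫
      Functor.isoWhiskerRight ((functorExtension₂CompWhiskeringLeftToKaroubiIso (Kleisli adj.toMonad) D).app K)
        (toKaroubiEquivalence D).inverse ≪≫
      Functor.associator _ _ _ ≪≫
      Functor.isoWhiskerLeft K (toKaroubiEquivalence D).unitIso.symm ≪≫ K.rightUnitor
  · set L : Karoubi (Kleisli adj.toMonad) ⥤ Karoubi D :=
      (functorExtension₂ (Kleisli adj.toMonad) D).obj K with hL
    have hfaith : L.Faithful := by
      constructor
      intro P Q f g hfg
      apply Karoubi.hom_ext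
      apply Kinj
      exact congrArg Karoubi.Hom.f hfg
    have hfull : L.Full := by
      constructor
      intro P Q g
      obtain ⟨h, hh⟩ := Ksurj g.f
      have comm : P.p ≫ (P.p ≫ h ≫ Q.p) ≫ Q.p = P.p ≫ h ≫ Q.p := by
        rw [← Category.assoc, ← Category.assoc, ← Category.assoc, P.idem,
          Category.assoc, Category.assoc, Q.idem]
      refine ⟨⟨P.p ≫ h ≫ Q.p, comm⟩, ?_⟩
      apply Karoubi.hom_ext
      change K.map (P.p ≫ h ≫ Q.p) = g.f
      rw [K.map_comp, K.map_comp, hh]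
      exact (g.comm : K.map P.p ≫ g.f ≫ K.map Q.p = g.f)
    have hsurj : L.EssSurj := by
      constructor
      intro P
      obtain ⟨i, hi⟩ := key P.X
      have hi' := reassoc_of% hi
      have hP' := reassoc_of% P.idem
      have hff : (adj.counit.app P.X ≫ P.p ≫ i) ≫ adj.counit.app P.X ≫ P.p ≫ i =
          adj.counit.app P.X ≫ P.p ≫ i := by
        simp only [Category.assoc, hi', hP']
      obtain ⟨q, hq⟩ := Ksurj (X := Kleisli.mk _ (G.obj P.X))
        (Y := Kleisli.mk _ (G.obj P.X)) (adj.counit.app P.X ≫ P.p ≫ i)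
      have hqq : q ≫ q = q := by
        apply Kinj
        rw [K.map_comp, hq]; exact hff
      refine ⟨⟨Kleisli.mk _ (G.obj P.X), q, hqq⟩, ⟨?_⟩⟩
      have hc1 : adj.counit.app P.X ≫ P.p =
          (adj.counit.app P.X ≫ P.p ≫ i) ≫ (adj.counit.app P.X ≫ P.p) ≫ P.p := by
        simp only [Category.assoc, hi', hP', P.idem]
      have hc2 : P.p ≫ i = P.p ≫ (P.p ≫ i) ≫ adj.counit.app P.X ≫ P.p ≫ i := by
        simp only [Category.assoc, hi', hP']
      have hc3 : (adj.counit.app P.X ≫ P.p) ≫ P.p ≫ i =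
          adj.counit.app P.X ≫ P.p ≫ i := by
        simp only [Category.assoc, hP']
      have hc4 : (P.p ≫ i) ≫ adj.counit.app P.X ≫ P.p = P.p := by
        simp only [Category.assoc, hi', P.idem]
      refine ⟨⟨adj.counit.app P.X ≫ P.p, ?_⟩, ⟨P.p ≫ i, ?_⟩, ?_, ?_⟩
      · show K.map q ≫ (adj.counit.app P.X ≫ P.p) ≫ P.p = adj.counit.app P.X ≫ P.p
        rw [hq]
        exact hc1.symm
      · show P.p ≫ (P.p ≫ i) ≫ K.map q = P.p ≫ i
        rw [hq]
        exact hc2.symm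
      · apply Karoubi.hom_ext
        show (adj.counit.app P.X ≫ P.p) ≫ P.p ≫ i = K.map q
        rw [hq]
        exact hc3
      · apply Karoubi.hom_ext
        show (P.p ≫ i) ≫ adj.counit.app P.X ≫ P.p = P.p
        exact hc4
    haveI := hfaith; haveI := hfull; haveI := hsurj
    haveI : L.IsEquivalence := {}
    exact inferInstanceAs (Functor.IsEquivalence (L ⋙ (toKaroubiEquivalence D).inverse))
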